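/- Let Σ=(X,𝒰,φ) be a forward complete control system. The following statements are equivalent: (i) Σ is strongly input-to-state stable (sISS); (ii) Σ has the strong asymptotic gain (sAG) property and is uniformly globally stable (UGS); (iii) Σ has the strong limit property (sLIM) and is UGS. -/

import Mathlib

open Set Filter

/-- Class `K`: continuous, strictly increasing on `[0,∞)` and vanishing at `0`. -/
def ClassK (γ : ℝ → ℝ) : Prop :=
  ContinuousOn γ (Ici 0) ∧ StrictMonoOn γ (Ici 0) ∧ γ 0 = 0

/-- Class `K∞`: class `K` and unbounded. -/
def ClassKinf (γ : ℝ → ℝ) : Prop :=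
  ClassK γ ∧ ∀ c : ℝ, ∃ r : ℝ, 0 ≤ r ∧ c ≤ γ r

/-- The class `K∞ ∪ {0}`. -/
def ClassKinf0 (γ : ℝ → ℝ) : Prop :=
  ClassKinf γ ∨ ∀ r : ℝ, 0 ≤ r → γ r = 0

/-- The class `K ∪ {0}`. -/
def ClassK0 (γ : ℝ → ℝ) : Prop :=
  ClassK γ ∨ ∀ r : ℝ, 0 ≤ r → γ r = 0

/-- Class `L`: continuous, strictly decreasing on `[0,∞)` with limit `0` at infinity. -/
def ClassL (γ : ℝ → ℝ) : Prop :=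
  ContinuousOn γ (Ici 0) ∧ StrictAntiOn γ (Ici 0) ∧ Tendsto γ atTop (nhds 0)

/-- Class `KL`. -/
def ClassKL (β : ℝ → ℝ → ℝ) : Prop :=
  ContinuousOn (fun p : ℝ × ℝ => β p.1 p.2) ((Ici 0) ×ˢ (Ici 0)) ∧
  (∀ t : ℝ, 0 ≤ t → ClassK (fun r => β r t)) ∧
  ∀ r : ℝ, 0 < r → StrictAntiOn (β r) (Ici 0) ∧ Tendsto (β r) atTop (nhds 0)

/-- A forward complete control system `Σ = (X, 𝒰, φ)`: inputs are functions
`u : ℝ₊ → U` (modelled as functions on `ℝ`, with only `t ≥ 0` relevant);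
the set `inputs` of admissible inputs carries a norm `Unorm`, is shift invariant and
closed under concatenation; the transition map `phi` satisfies the identity property,
causality, continuity in time and the cocycle property. -/
structure ControlSystem (X U : Type*) [NormedAddCommGroup X] [NormedSpace ℝ X] [Zero U] where
  /-- the set of admissible input functions -/
  inputs : Set (ℝ → U)
  /-- the norm of the input space -/
  Unorm : (ℝ → U) → ℝ
  Unorm_nonneg : ∀ u, 0 ≤ Unorm u
  /-- the zero input is admissible -/
  zero_mem : (fun _ : ℝ => (0 : U)) ∈ inputs
  Unorm_zero : Unorm (fun _ : ℝ => (0 : U)) = 0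
  /-- the transition map `φ(t,x,u)` -/
  phi : ℝ → X → (ℝ → U) → X
  /-- axiom of shift invariance -/
  shift_mem : ∀ u ∈ inputs, ∀ τ : ℝ, 0 ≤ τ → (fun s => u (s + τ)) ∈ inputs
  shift_norm : ∀ u ∈ inputs, ∀ τ : ℝ, 0 ≤ τ → Unorm (fun s => u (s + τ)) ≤ Unorm u
  /-- axiom of concatenation -/
  concat_mem : ∀ u₁ ∈ inputs, ∀ u₂ ∈ inputs, ∀ t : ℝ, 0 < t →
    (fun s => if s ≤ t then u₁ s else u₂ (s - t)) ∈ inputs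
  /-- identity property -/
  identity : ∀ x u, phi 0 x u = x
  /-- causality -/
  causality : ∀ t : ℝ, 0 ≤ t → ∀ x : X, ∀ u ∈ inputs, ∀ v ∈ inputs,
    (∀ s ∈ Icc (0:ℝ) t, u s = v s) → phi t x u = phi t x v
  /-- continuity of trajectories -/
  cont : ∀ x : X, ∀ u ∈ inputs, ContinuousOn (fun t => phi t x u) (Ici 0)
  /-- cocycle property -/
  cocycle : ∀ t : ℝ, 0 ≤ t → ∀ h : ℝ, 0 ≤ h → ∀ x : X, ∀ u ∈ inputs,
    phi h (phi t x u) (fun s => u (s + t)) = phi (t + h) x u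

namespace ControlSystem

variable {X U : Type*} [NormedAddCommGroup X] [NormedSpace ℝ X] [Zero U]

/-- the zero input -/
def zeroIn : ℝ → U := fun _ => 0

/-- Uniform global stability. -/
def UGS (S : ControlSystem X U) : Prop :=
  ∃ σ γ, ClassKinf σ ∧ ClassKinf0 γ ∧
    ∀ t : ℝ, 0 ≤ t → ∀ x : X, ∀ u ∈ S.inputs,
      ‖S.phi t x u‖ ≤ σ ‖x‖ + γ (S.Unorm u)

/-- Strong asymptotic gain property. -/
def sAG (S : ControlSystem X U) : Prop :=
  ∃ γ, ClassKinf0 γ ∧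
    ∀ x : X, ∀ ε : ℝ, 0 < ε → ∃ τ : ℝ, 0 ≤ τ ∧
      ∀ u ∈ S.inputs, ∀ t : ℝ, τ ≤ t →
        ‖S.phi t x u‖ ≤ ε + γ (S.Unorm u)

/-- Strong limit property. -/
def sLIM (S : ControlSystem X U) : Prop :=
  ∃ γ, ClassK0 γ ∧
    ∀ ε : ℝ, 0 < ε → ∀ x : X, ∃ τ : ℝ, 0 ≤ τ ∧
      ∀ u ∈ S.inputs, ∃ t ∈ Icc (0:ℝ) τ,
        ‖S.phi t x u‖ ≤ ε + γ (S.Unorm u)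

/-- Strong input-to-state stability. -/
def sISS (S : ControlSystem X U) : Prop :=
  ∃ (γ σ : ℝ → ℝ) (β : X → ℝ → ℝ), ClassK γ ∧ ClassKinf σ ∧
    (∀ x : X, x ≠ 0 → ClassL (β x)) ∧
    (∀ x : X, ∀ t : ℝ, 0 ≤ t → 0 ≤ β x t ∧ β x t ≤ σ ‖x‖) ∧
    ∀ x : X, ∀ u ∈ S.inputs, ∀ t : ℝ, 0 ≤ t →
      ‖S.phi t x u‖ ≤ β x t + γ (S.Unorm u)


/-! ### Auxiliary lemmas on comparison functions -/

lemma classK0_nonneg {γ : ℝ → ℝ} (h : ClassK0 γ) {r : ℝ} (hr : 0 ≤ r) : 0 ≤ γ r := by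
  rcases h with h | h
  · rcases eq_or_lt_of_le hr with h0 | h0
    · rw [← h0, h.2.2]
    · rw [← h.2.2]
      exact (h.2.1 Set.self_mem_Ici (Set.mem_Ici.mpr h0.le) h0).le
  · rw [h r hr]

lemma classK0_zero {γ : ℝ → ℝ} (h : ClassK0 γ) : γ 0 = 0 := by
  rcases h with h | h
  · exact h.2.2
  · exact h 0 le_rfl

lemma classK0_mono {γ : ℝ → ℝ} (h : ClassK0 γ) : MonotoneOn γ (Ici 0) := by
  rcases h with h | h
  · exact h.2.1.monotoneOn
  · intro a ha b hb _
    rw [h a ha, h b hb]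

lemma classK0_cont {γ : ℝ → ℝ} (h : ClassK0 γ) : ContinuousOn γ (Ici 0) := by
  rcases h with h | h
  · exact h.1
  · exact continuousOn_const.congr fun r hr => h r hr

lemma classKinf0_toK0 {γ : ℝ → ℝ} (h : ClassKinf0 γ) : ClassK0 γ :=
  h.imp And.left id

lemma kinf_of_add {γ₁ γ₂ : ℝ → ℝ} (h₁ : ClassK0 γ₁) (h₂ : ClassK0 γ₂) :
    ClassKinf (fun r => γ₁ r + γ₂ r + r) := by
  refine ⟨⟨?_, ?_, ?_⟩, ?_⟩
  · exact ((classK0_cont h₁).add (classK0_cont h₂)).add continuous_id.continuousOn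
  · intro a ha b hb hab
    have e1 := classK0_mono h₁ ha hb hab.le
    have e2 := classK0_mono h₂ ha hb hab.le
    dsimp only
    linarith
  · simp [classK0_zero h₁, classK0_zero h₂]
  · intro c
    refine ⟨max c 0, le_max_right _ _, ?_⟩
    have e1 := classK0_nonneg h₁ (le_max_right c 0)
    have e2 := classK0_nonneg h₂ (le_max_right c 0)
    have e3 := le_max_left c 0
    dsimp only
    linarith

lemma classK0_comp_kinf {σ γ : ℝ → ℝ} (hσ : ClassKinf σ) (hγ : ClassK0 γ) :
    ClassK0 (fun r => σ (2 * γ r)) := by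
  rcases hγ with hγ | hγ
  · left
    refine ⟨?_, ?_, ?_⟩
    · refine ContinuousOn.comp hσ.1.1 (continuousOn_const.mul hγ.1) ?_
      intro r hr
      have := classK0_nonneg (Or.inl hγ) (Set.mem_Ici.mp hr)
      simp only [Set.mem_Ici]
      linarith
    · intro a ha b hb hab
      have hγa := classK0_nonneg (Or.inl hγ) (Set.mem_Ici.mp ha)
      have hγb := classK0_nonneg (Or.inl hγ) (Set.mem_Ici.mp hb)
      exact hσ.1.2.1 (Set.mem_Ici.mpr (by linarith)) (Set.mem_Ici.mpr (by linarith))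
        (by have := hγ.2.1 ha hb hab; linarith)
    · simp [classK0_zero (Or.inl hγ), hσ.1.2.2]
  · right
    intro r hr
    dsimp only
    rw [hγ r hr]
    simpa using hσ.1.2.2

/-! ### The easy implications -/

lemma sISS_to_UGS {S : ControlSystem X U} (h : S.sISS) : S.UGS := by
  obtain ⟨γ, σ, β, hγ, hσ, _, hβσ, hest⟩ := h
  refine ⟨σ, fun r => γ r + γ r + r, hσ, Or.inl (kinf_of_add (Or.inl hγ) (Or.inl hγ)), ?_⟩
  intro t ht x u hu
  have h1 := hest x u hu t ht
  have h2 := (hβσ x t ht).2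
  have h3 := classK0_nonneg (Or.inl hγ) (S.Unorm_nonneg u)
  have h4 := S.Unorm_nonneg u
  dsimp only
  linarith

lemma sISS_to_sAG {S : ControlSystem X U} (h : S.sISS) : S.sAG := by
  obtain ⟨γ, σ, β, hγ, hσ, hβL, hβσ, hest⟩ := h
  refine ⟨fun r => γ r + γ r + r, Or.inl (kinf_of_add (Or.inl hγ) (Or.inl hγ)), ?_⟩
  intro x ε hε
  have hγle : ∀ u, γ (S.Unorm u) ≤ γ (S.Unorm u) + γ (S.Unorm u) + S.Unorm u := by
    intro u
    have h3 := classK0_nonneg (Or.inl hγ) (S.Unorm_nonneg u)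
    have h4 := S.Unorm_nonneg u
    linarith
  by_cases hx : x = 0
  · refine ⟨0, le_rfl, ?_⟩
    intro u hu t ht
    have h1 := hest x u hu t ht
    have h2 := (hβσ x t ht).2
    have h2' := (hβσ x t ht).1
    have h5 : σ ‖x‖ = 0 := by rw [hx, norm_zero, hσ.1.2.2]
    have := hγle u
    dsimp only
    linarith
  · have htend := (hβL x hx).2.2
    rw [Metric.tendsto_atTop] at htend
    obtain ⟨τ, hτ⟩ := htend ε hε
    refine ⟨max τ 0, le_max_right _ _, ?_⟩
    intro u hu t ht
    have ht0 : (0:ℝ) ≤ t := le_trans (le_max_right τ 0) ht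
    have h1 := hest x u hu t ht0
    have h2 := hτ t (le_trans (le_max_left τ 0) ht)
    rw [Real.dist_eq, sub_zero] at h2
    have h3 : β x t ≤ |β x t| := le_abs_self _
    have := hγle u
    dsimp only
    linarith

lemma sAG_to_sLIM {S : ControlSystem X U} (h : S.sAG) : S.sLIM := by
  obtain ⟨γ, hγ, hAG⟩ := h
  refine ⟨γ, classKinf0_toK0 hγ, ?_⟩
  intro ε hε x
  obtain ⟨τ, hτ0, hτ⟩ := hAG x ε hε
  exact ⟨τ, hτ0, fun u hu => ⟨τ, ⟨hτ0, le_rfl⟩, hτ u hu τ le_rfl⟩⟩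

/-! ### sLIM ∧ UGS → sAG -/

lemma sLIM_UGS_to_sAG {S : ControlSystem X U} (hL : S.sLIM) (hU : S.UGS) : S.sAG := by
  obtain ⟨γL, hγL, hLIM⟩ := hL
  obtain ⟨σ, γU, hσ, hγU, hUGS⟩ := hU
  have hσnn : ∀ r : ℝ, 0 ≤ r → 0 ≤ σ r := fun r hr => classK0_nonneg (Or.inl hσ.1) hr
  have hσmono : MonotoneOn σ (Ici 0) := hσ.1.2.1.monotoneOn
  refine ⟨fun r => σ (2 * γL r) + γU r + r,
    Or.inl (kinf_of_add (classK0_comp_kinf hσ hγL) (classKinf0_toK0 hγU)), ?_⟩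
  intro x ε hε
  -- find δ > 0 with σ (2δ) ≤ ε
  obtain ⟨δ, hδ0, hδ⟩ : ∃ δ > 0, σ (2 * δ) ≤ ε := by
    have hc : ContinuousWithinAt σ (Ici 0) 0 := hσ.1.1 0 Set.self_mem_Ici
    have hc' : Tendsto σ (nhdsWithin 0 (Ici 0)) (nhds 0) := by
      have := hc.tendsto
      rwa [hσ.1.2.2] at this
    have hpre : σ ⁻¹' (Iio ε) ∈ nhdsWithin 0 (Ici 0) := hc' (Iio_mem_nhds hε)
    rw [Metric.mem_nhdsWithin_iff] at hpre
    obtain ⟨ε', hε', hsub⟩ := hpre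
    refine ⟨ε' / 4, by linarith, ?_⟩
    have hmem : 2 * (ε' / 4) ∈ Metric.ball (0:ℝ) ε' ∩ Ici 0 := by
      constructor
      · rw [Metric.mem_ball, Real.dist_eq, sub_zero]
        rw [abs_of_nonneg (by linarith)]
        linarith
      · exact Set.mem_Ici.mpr (by linarith)
    exact (hsub hmem).le
  obtain ⟨τ, hτ0, hτ⟩ := hLIM δ hδ0 x
  refine ⟨τ, hτ0, ?_⟩
  intro u hu t ht
  obtain ⟨ts, hts, htsb⟩ := hτ u hu
  have hts0 : (0:ℝ) ≤ ts := hts.1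
  have htts : ts ≤ t := le_trans hts.2 ht
  -- shifted input
  have hv : (fun s => u (s + ts)) ∈ S.inputs := S.shift_mem u hu ts hts0
  have hvnorm : S.Unorm (fun s => u (s + ts)) ≤ S.Unorm u := S.shift_norm u hu ts hts0
  have hcoc := S.cocycle ts hts0 (t - ts) (by linarith) x u hu
  have hteq : ts + (t - ts) = t := by ring
  rw [hteq] at hcoc
  have hugs := hUGS (t - ts) (by linarith) (S.phi ts x u) (fun s => u (s + ts)) hv
  rw [hcoc] at hugs
  have hγLnn : 0 ≤ γL (S.Unorm u) := classK0_nonneg hγL (S.Unorm_nonneg u)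
  have hσ1 : σ ‖S.phi ts x u‖ ≤ σ (δ + γL (S.Unorm u)) :=
    hσmono (Set.mem_Ici.mpr (norm_nonneg _)) (Set.mem_Ici.mpr (by linarith)) htsb
  have hsplit : σ (δ + γL (S.Unorm u)) ≤ σ (2 * δ) + σ (2 * γL (S.Unorm u)) := by
    rcases le_total (γL (S.Unorm u)) δ with hle | hle
    · have h1 : σ (δ + γL (S.Unorm u)) ≤ σ (2 * δ) :=
        hσmono (Set.mem_Ici.mpr (by linarith)) (Set.mem_Ici.mpr (by linarith)) (by linarith)
      have h2 : 0 ≤ σ (2 * γL (S.Unorm u)) := hσnn _ (by linarith)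
      linarith
    · have h1 : σ (δ + γL (S.Unorm u)) ≤ σ (2 * γL (S.Unorm u)) :=
        hσmono (Set.mem_Ici.mpr (by linarith)) (Set.mem_Ici.mpr (by linarith)) (by linarith)
      have h2 : 0 ≤ σ (2 * δ) := hσnn _ (by linarith)
      linarith
  have hγUmono : γU (S.Unorm (fun s => u (s + ts))) ≤ γU (S.Unorm u) :=
    classK0_mono (classKinf0_toK0 hγU) (Set.mem_Ici.mpr (S.Unorm_nonneg _))
      (Set.mem_Ici.mpr (S.Unorm_nonneg _)) hvnorm
  have hr := S.Unorm_nonneg u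
  dsimp only
  linarith

/-! ### sAG ∧ UGS → sISS -/

lemma sAG_UGS_to_sISS {S : ControlSystem X U} (hA : S.sAG) (hU : S.UGS) : S.sISS := by
  classical
  obtain ⟨γA, hγA, hAG⟩ := hA
  obtain ⟨σ, γU, hσ, hγU, hUGS⟩ := hU
  have hσnn : ∀ r : ℝ, 0 ≤ r → 0 ≤ σ r := fun r hr => classK0_nonneg (Or.inl hσ.1) hr
  set γ : ℝ → ℝ := fun r => γA r + γU r + r with hγdef
  have hγ : ClassKinf γ := kinf_of_add (classKinf0_toK0 hγA) (classKinf0_toK0 hγU)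
  have hγA_le : ∀ r : ℝ, 0 ≤ r → γA r ≤ γ r := by
    intro r hr
    have h1 := classK0_nonneg (classKinf0_toK0 hγU) hr
    simp only [hγdef]
    linarith
  have hγU_le : ∀ r : ℝ, 0 ≤ r → γU r ≤ γ r := by
    intro r hr
    have h1 := classK0_nonneg (classKinf0_toK0 hγA) hr
    simp only [hγdef]
    linarith
  set M : X → ℝ := fun x => σ ‖x‖ with hMdef
  have hM : ∀ x, 0 ≤ M x := fun x => hσnn _ (norm_nonneg x)
  -- the envelope function
  set SS : X → ℝ → Set ℝ := fun x t =>
    {r | ∃ u ∈ S.inputs, ∃ s : ℝ, max t 0 ≤ s ∧ r = max (‖S.phi s x u‖ - γ (S.Unorm u)) 0}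
    with hSSdef
  set f : X → ℝ → ℝ := fun x t => sSup (SS x t) with hfdef
  have hne : ∀ x t, (SS x t).Nonempty := by
    intro x t
    exact ⟨_, ⟨(fun _ : ℝ => (0 : U)), S.zero_mem, max t 0, le_rfl, rfl⟩⟩
  have hub : ∀ x t, ∀ r ∈ SS x t, r ≤ M x := by
    rintro x t r ⟨u, hu, s, hs, rfl⟩
    have hs0 : (0:ℝ) ≤ s := le_trans (le_max_right t 0) hs
    have h1 := hUGS s hs0 x u hu
    have h2 : γU (S.Unorm u) ≤ γ (S.Unorm u) := hγU_le _ (S.Unorm_nonneg u)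
    exact max_le (by linarith) (hM x)
  have hbdd : ∀ x t, BddAbove (SS x t) := fun x t => ⟨M x, hub x t⟩
  have hf_le : ∀ x t, f x t ≤ M x := fun x t => csSup_le (hne x t) (hub x t)
  have hf_nn : ∀ x t, 0 ≤ f x t := by
    intro x t
    have hmem : max (‖S.phi (max t 0) x (fun _ : ℝ => (0:U))‖ -
        γ (S.Unorm (fun _ : ℝ => (0:U)))) 0 ∈ SS x t :=
      ⟨(fun _ : ℝ => (0 : U)), S.zero_mem, max t 0, le_rfl, rfl⟩
    exact le_trans (le_max_right _ _) (le_csSup (hbdd x t) hmem)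
  have hf_ge : ∀ x t, 0 ≤ t → ∀ u ∈ S.inputs, ‖S.phi t x u‖ - γ (S.Unorm u) ≤ f x t := by
    intro x t ht u hu
    have hmem : max (‖S.phi t x u‖ - γ (S.Unorm u)) 0 ∈ SS x t :=
      ⟨u, hu, t, max_le le_rfl ht, rfl⟩
    exact le_trans (le_max_left _ _) (le_csSup (hbdd x t) hmem)
  have hf_anti : ∀ x, Antitone (f x) := by
    intro x a b hab
    refine csSup_le_csSup (hbdd x a) (hne x b) ?_
    rintro r ⟨u, hu, s, hs, rfl⟩
    exact ⟨u, hu, s, le_trans (max_le_max hab le_rfl) hs, rfl⟩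
  have hf_decay : ∀ x, ∀ ε : ℝ, 0 < ε → ∃ τ, 0 ≤ τ ∧ ∀ t, τ ≤ t → f x t ≤ ε := by
    intro x ε hε
    obtain ⟨τ, hτ0, hτ⟩ := hAG x ε hε
    refine ⟨τ, hτ0, fun t ht => csSup_le (hne x t) ?_⟩
    rintro r ⟨u, hu, s, hs, rfl⟩
    have hsτ : τ ≤ s := le_trans (le_trans ht (le_max_left t 0)) hs
    have h1 : ‖S.phi s x u‖ ≤ ε + γA (S.Unorm u) := hτ u hu s hsτ
    have h2 := hγA_le (S.Unorm u) (S.Unorm_nonneg u)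
    exact max_le (by linarith) hε.le
  -- integrability and the primitive
  have hint : ∀ x a b, IntervalIntegrable (f x) MeasureTheory.volume a b :=
    fun x a b => (hf_anti x).intervalIntegrable
  have hFc : ∀ x, Continuous (fun t => ∫ s in (0:ℝ)..t, f x s) :=
    fun x => intervalIntegral.continuous_primitive (hint x) 0
  set β : X → ℝ → ℝ := fun x t => (∫ s in (t-1)..t, f x s) + M x * Real.exp (-t) with hβdef
  have hIF : ∀ x t, (∫ s in (t-1)..t, f x s) =
      (∫ s in (0:ℝ)..t, f x s) - ∫ s in (0:ℝ)..(t-1), f x s :=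
    fun x t => (intervalIntegral.integral_interval_sub_left (hint x 0 t) (hint x 0 (t-1))).symm
  have hI_nn : ∀ x t, 0 ≤ ∫ s in (t-1)..t, f x s := fun x t =>
    intervalIntegral.integral_nonneg (by linarith) (fun s _ => hf_nn x s)
  have hI_le : ∀ x t, (∫ s in (t-1)..t, f x s) ≤ M x := by
    intro x t
    have h1 : (∫ s in (t-1)..t, f x s) ≤ ∫ s in (t-1)..t, (fun _ => M x) s :=
      intervalIntegral.integral_mono_on (by linarith) (hint x _ _)
        intervalIntegrable_const (fun s _ => hf_le x s)
    have h2 : (∫ s in (t-1)..t, (fun _ => M x) s) = M x := by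
      simp
    linarith
  have hI_ge : ∀ x t, f x t ≤ ∫ s in (t-1)..t, f x s := by
    intro x t
    have h1 : (∫ s in (t-1)..t, (fun _ => f x t) s) ≤ ∫ s in (t-1)..t, f x s :=
      intervalIntegral.integral_mono_on (by linarith) intervalIntegrable_const
        (hint x _ _) (fun s hs => hf_anti x hs.2)
    have h2 : (∫ s in (t-1)..t, (fun _ => f x t) s) = f x t := by
      simp
    linarith
  have hI_anti : ∀ x a b, a ≤ b → (∫ s in (b-1)..b, f x s) ≤ ∫ s in (a-1)..a, f x s := by
    intro x a b hab
    have hanti2 : Antitone (fun s => f x (s + (b - a))) :=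
      fun s s' h => hf_anti x (by linarith)
    have h1 : (∫ s in (a-1)..a, f x (s + (b-a))) = ∫ s in (b-1)..b, f x s := by
      rw [intervalIntegral.integral_comp_add_right (f x) (b-a)]
      congr 1 <;> ring
    rw [← h1]
    exact intervalIntegral.integral_mono_on (by linarith) hanti2.intervalIntegrable
      (hint x _ _) (fun s hs => hf_anti x (by linarith [hs.1, hs.2]))
  have hf_tend : ∀ x, Tendsto (fun t => f x t) atTop (nhds 0) := by
    intro x
    rw [Metric.tendsto_atTop]
    intro ε hε
    obtain ⟨τ, hτ0, hτ⟩ := hf_decay x (ε/2) (by linarith)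
    refine ⟨τ, fun t ht => ?_⟩
    have h1 := hτ t ht
    have h2 := hf_nn x t
    rw [Real.dist_eq, sub_zero, abs_of_nonneg h2]
    linarith
  have hI_tend : ∀ x, Tendsto (fun t => ∫ s in (t-1)..t, f x s) atTop (nhds 0) := by
    intro x
    have h1 : Tendsto (fun t : ℝ => f x (t - 1)) atTop (nhds 0) := by
      have := (hf_tend x).comp (tendsto_atTop_add_const_right atTop (-1) tendsto_id)
      simpa [sub_eq_add_neg, Function.comp_def] using this
    refine squeeze_zero' (Eventually.of_forall fun t => hI_nn x t)
      (Eventually.of_forall fun t => ?_) h1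
    have h2 : (∫ s in (t-1)..t, f x s) ≤ ∫ s in (t-1)..t, (fun _ => f x (t-1)) s :=
      intervalIntegral.integral_mono_on (by linarith) (hint x _ _)
        intervalIntegrable_const (fun s hs => hf_anti x hs.1)
    have h3 : (∫ s in (t-1)..t, (fun _ => f x (t-1)) s) = f x (t-1) := by
      simp
    linarith
  -- assemble
  refine ⟨γ, fun r => σ r + σ r + r, β, hγ.1,
    kinf_of_add (Or.inl hσ.1) (Or.inl hσ.1), ?_, ?_, ?_⟩
  · -- ClassL of β x for x ≠ 0
    intro x hx
    have hMx : 0 < M x := by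
      have : σ 0 < σ ‖x‖ := hσ.1.2.1 Set.self_mem_Ici
        (Set.mem_Ici.mpr (norm_nonneg x)) (norm_pos_iff.mpr hx)
      rw [hσ.1.2.2] at this
      exact this
    refine ⟨?_, ?_, ?_⟩
    · -- continuity
      have hc1 : Continuous (fun t => ∫ s in (t-1)..t, f x s) := by
        have : (fun t => ∫ s in (t-1)..t, f x s) =
            (fun t => (∫ s in (0:ℝ)..t, f x s) - ∫ s in (0:ℝ)..(t-1), f x s) := by
          funext t
          exact hIF x t
        rw [this]
        exact (hFc x).sub ((hFc x).comp (continuous_id.sub continuous_const))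
      have hc2 : Continuous (fun t : ℝ => M x * Real.exp (-t)) :=
        continuous_const.mul (Real.continuous_exp.comp continuous_neg)
      exact (hc1.add hc2).continuousOn
    · -- strict antitonicity
      intro a ha b hb hab
      have h1 := hI_anti x a b hab.le
      have h2 : M x * Real.exp (-b) < M x * Real.exp (-a) :=
        mul_lt_mul_of_pos_left (Real.exp_lt_exp.mpr (by linarith)) hMx
      simp only [hβdef]
      linarith
    · -- tendsto 0
      have h1 := (hI_tend x).add (Real.tendsto_exp_neg_atTop_nhds_zero.const_mul (M x))
      simpa using h1
  · -- bounds on β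
    intro x t ht
    constructor
    · have h1 := hI_nn x t
      have h2 : 0 ≤ M x * Real.exp (-t) := mul_nonneg (hM x) (Real.exp_pos _).le
      simp only [hβdef]
      linarith
    · have h1 := hI_le x t
      have h2 : Real.exp (-t) ≤ 1 := Real.exp_le_one_iff.mpr (by linarith)
      have h3 : M x * Real.exp (-t) ≤ M x * 1 := mul_le_mul_of_nonneg_left h2 (hM x)
      have h4 : (0:ℝ) ≤ ‖x‖ := norm_nonneg x
      simp only [hβdef, hMdef] at *
      linarith
  · -- the sISS estimate
    intro x u hu t ht
    have h1 := hf_ge x t ht u hu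
    have h2 := hI_ge x t
    have h3 : 0 ≤ M x * Real.exp (-t) := mul_nonneg (hM x) (Real.exp_pos _).le
    simp only [hβdef]
    linarith

/-- **Characterization of strong ISS**: sISS ⇔ sAG ∧ UGS ⇔ sLIM ∧ UGS. -/
theorem sISS_characterization (S : ControlSystem X U) :
    (S.sISS ↔ S.sAG ∧ S.UGS) ∧ (S.sISS ↔ S.sLIM ∧ S.UGS) := by
  constructor
  · constructor
    · intro h
      exact ⟨sISS_to_sAG h, sISS_to_UGS h⟩
    · rintro ⟨hA, hU⟩
      exact sAG_UGS_to_sISS hA hU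
  · constructor
    · intro h
      exact ⟨sAG_to_sLIM (sISS_to_sAG h), sISS_to_UGS h⟩
    · rintro ⟨hL, hU⟩
      exact sAG_UGS_to_sISS (sLIM_UGS_to_sAG hL hU) hU

end ControlSystem
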